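/- Let m and n be positive integers with n ≡ 0 (mod 2). If m ≡ 0 (mod 3) and mn ≡ 6 or 12 (mod 24), or if mn ≡ 14 or 20 (mod 24), then Φ(m×n,3,1) ≤ J(m×n,3,1) − 1. -/

import Mathlib

/-- The cyclic shift of a codeword `B ⊆ I_m × Z_n` by `τ`. -/
def OOCshift {m n : ℕ} (B : Finset (Fin m × ZMod n)) (τ : ZMod n) :
    Finset (Fin m × ZMod n) :=
  B.image fun p => (p.1, p.2 + τ)

/-- A two-dimensional `(m × n, k, lam)` optical orthogonal code: a family of
`k`-element codewords of `I_m × Z_n` with auto- and cross-correlation at most `lam`. -/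
def IsOOC (m n k lam : ℕ) (C : Finset (Finset (Fin m × ZMod n))) : Prop :=
  (∀ A ∈ C, A.card = k) ∧
  (∀ A ∈ C, ∀ τ : ZMod n, τ ≠ 0 → (A ∩ OOCshift A τ).card ≤ lam) ∧
  (∀ A ∈ C, ∀ B ∈ C, A ≠ B → ∀ τ : ZMod n, (A ∩ OOCshift B τ).card ≤ lam)

/-- The Johnson bound `J(m×n,3,1) = ⌊ m⌊(mn-1)/2⌋ / 3 ⌋`. -/
def J (m n : ℕ) : ℕ := m * ((m * n - 1) / 2) / 3

/-! ### Auxiliary machinery: differences of codewords -/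

/-- the difference map -/
def oocf {m n : ℕ} (pq : (Fin m × ZMod n) × (Fin m × ZMod n)) : Fin m × Fin m × ZMod n :=
  (pq.1.1, pq.2.1, pq.2.2 - pq.1.2)

/-- ordered pairs of distinct points of `A` -/
def oocP {m n : ℕ} (A : Finset (Fin m × ZMod n)) :
    Finset ((Fin m × ZMod n) × (Fin m × ZMod n)) :=
  (A ×ˢ A).filter (fun pq => pq.1 ≠ pq.2)

/-- the set of ordered differences of `A` -/
def oocD {m n : ℕ} (A : Finset (Fin m × ZMod n)) : Finset (Fin m × Fin m × ZMod n) :=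
  (oocP A).image oocf

lemma mem_oocP {m n : ℕ} {A : Finset (Fin m × ZMod n)} {pq} :
    pq ∈ oocP A ↔ pq.1 ∈ A ∧ pq.2 ∈ A ∧ pq.1 ≠ pq.2 := by
  rw [oocP, Finset.mem_filter, Finset.mem_product]; tauto

/-- The fundamental lemma: two ordered pairs (in codewords of the code) with the same
difference triple must coincide (and come from the same codeword). -/
lemma ooc_shared {m n : ℕ} {C : Finset (Finset (Fin m × ZMod n))} (hC : IsOOC m n 3 1 C)
    {A B : Finset (Fin m × ZMod n)} (hA : A ∈ C) (hB : B ∈ C)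
    {p q p' q' : Fin m × ZMod n} (hp : p ∈ A) (hq : q ∈ A) (hpq : p ≠ q)
    (hp' : p' ∈ B) (hq' : q' ∈ B)
    (h1 : p.1 = p'.1) (h2 : q.1 = q'.1) (h3 : q.2 - p.2 = q'.2 - p'.2) :
    A = B ∧ p = p' ∧ q = q' := by
  set τ : ZMod n := p.2 - p'.2 with hτdef
  have hps : p ∈ OOCshift B τ := by
    refine Finset.mem_image.mpr ⟨p', hp', ?_⟩
    refine Prod.ext h1.symm ?_
    show p'.2 + (p.2 - p'.2) = p.2
    ring
  have hqs : q ∈ OOCshift B τ := by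
    refine Finset.mem_image.mpr ⟨q', hq', ?_⟩
    refine Prod.ext h2.symm ?_
    show q'.2 + (p.2 - p'.2) = q.2
    linear_combination -h3
  have hcard : 2 ≤ (A ∩ OOCshift B τ).card := by
    have hsub : ({p, q} : Finset (Fin m × ZMod n)) ⊆ A ∩ OOCshift B τ := by
      intro x hx
      rcases Finset.mem_insert.mp hx with rfl | hx
      · exact Finset.mem_inter.mpr ⟨hp, hps⟩
      · rcases Finset.mem_singleton.mp hx with rfl
        exact Finset.mem_inter.mpr ⟨hq, hqs⟩
    calc 2 = ({p, q} : Finset (Fin m × ZMod n)).card := by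
            rw [Finset.card_insert_of_notMem (by simpa using hpq), Finset.card_singleton]
      _ ≤ _ := Finset.card_le_card hsub
  by_cases hAB : A = B
  · subst hAB
    by_cases hτ0 : τ = 0
    · have hp2 : p.2 = p'.2 := sub_eq_zero.mp hτ0
      have hq2 : q.2 = q'.2 := by linear_combination h3 + hτ0
      exact ⟨rfl, Prod.ext h1 hp2, Prod.ext h2 hq2⟩
    · exact absurd (hC.2.1 A hA τ hτ0) (by omega)
  · exact absurd (hC.2.2 A hA B hB hAB τ) (by omega)

lemma ooc_inj {m n : ℕ} {C : Finset (Finset (Fin m × ZMod n))} (hC : IsOOC m n 3 1 C)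
    {A : Finset (Fin m × ZMod n)} (hA : A ∈ C) :
    Set.InjOn oocf (oocP A : Set ((Fin m × ZMod n) × (Fin m × ZMod n))) := by
  intro pq hpq pq' hpq' heq
  rw [Finset.mem_coe, mem_oocP] at hpq hpq'
  have h1 : pq.1.1 = pq'.1.1 := congrArg (fun t => t.1) heq
  have h2 : pq.2.1 = pq'.2.1 := congrArg (fun t => t.2.1) heq
  have h3 : pq.2.2 - pq.1.2 = pq'.2.2 - pq'.1.2 := congrArg (fun t => t.2.2) heq
  obtain ⟨-, hp, hq⟩ := ooc_shared hC hA hA hpq.1 hpq.2.1 hpq.2.2 hpq'.1 hpq'.2.1 h1 h2 h3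
  exact Prod.ext hp hq

lemma ooc_disj {m n : ℕ} {C : Finset (Finset (Fin m × ZMod n))} (hC : IsOOC m n 3 1 C)
    {A B : Finset (Fin m × ZMod n)} (hA : A ∈ C) (hB : B ∈ C) (hAB : A ≠ B) :
    Disjoint (oocD A) (oocD B) := by
  rw [Finset.disjoint_left]
  rintro t htA htB
  obtain ⟨pq, hpq, rfl⟩ := Finset.mem_image.mp htA
  obtain ⟨pq', hpq', heq⟩ := Finset.mem_image.mp htB
  rw [mem_oocP] at hpq hpq'
  have h1 : pq'.1.1 = pq.1.1 := congrArg (fun t => t.1) heq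
  have h2 : pq'.2.1 = pq.2.1 := congrArg (fun t => t.2.1) heq
  have h3 : pq'.2.2 - pq'.1.2 = pq.2.2 - pq.1.2 := congrArg (fun t => t.2.2) heq
  obtain ⟨hBA, -, -⟩ := ooc_shared hC hB hA hpq'.1 hpq'.2.1 hpq'.2.2 hpq.1 hpq.2.1 h1 h2 h3
  exact hAB hBA.symm

lemma ooc_excl {m n : ℕ} {C : Finset (Finset (Fin m × ZMod n))} (hC : IsOOC m n 3 1 C)
    {A : Finset (Fin m × ZMod n)} (hA : A ∈ C) (i : Fin m) (δ : ZMod n) (hδ : δ + δ = 0) :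
    (i, i, δ) ∉ oocD A := by
  intro ht
  obtain ⟨pq, hpq, heq⟩ := Finset.mem_image.mp ht
  rw [mem_oocP] at hpq
  have h1 : pq.1.1 = i := congrArg (fun t => t.1) heq
  have h2 : pq.2.1 = i := congrArg (fun t => t.2.1) heq
  have h3 : pq.2.2 - pq.1.2 = δ := congrArg (fun t => t.2.2) heq
  have h1' : pq.1.1 = pq.2.1 := h1.trans h2.symm
  have h3' : pq.2.2 - pq.1.2 = pq.1.2 - pq.2.2 := by linear_combination 2 * h3 + hδ
  obtain ⟨-, hp, -⟩ := ooc_shared hC hA hA hpq.1 hpq.2.1 hpq.2.2 hpq.2.1 hpq.1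
    h1' h1'.symm h3'
  exact hpq.2.2 hp

lemma oocP_card {m n : ℕ} {A : Finset (Fin m × ZMod n)} (hA : A.card = 3) :
    (oocP A).card = 6 := by
  have hdiag : ((A ×ˢ A).filter (fun pq => pq.1 = pq.2)) = A.image (fun a => (a, a)) := by
    ext x
    simp only [Finset.mem_filter, Finset.mem_product, Finset.mem_image]
    constructor
    · rintro ⟨⟨h1, h2⟩, h3⟩
      exact ⟨x.1, h1, Prod.ext rfl h3⟩
    · rintro ⟨a, ha, h⟩
      rw [← h]
      exact ⟨⟨ha, ha⟩, rfl⟩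
  have h1 : ((A ×ˢ A).filter (fun pq => pq.1 = pq.2)).card = 3 := by
    rw [hdiag, Finset.card_image_of_injective _ (fun a b h => (Prod.ext_iff.mp h).1), hA]
  have h2 := Finset.card_filter_add_card_filter_not
    (s := A ×ˢ A) (p := fun pq => pq.1 = pq.2)
  rw [Finset.card_product, hA] at h2
  have h3 : (oocP A).card = ((A ×ˢ A).filter (fun pq => ¬ pq.1 = pq.2)).card := rfl
  omega

lemma ooc_parity {m n : ℕ} (h2 : (2:ℕ) ∣ n) {A : Finset (Fin m × ZMod n)} (hA : A.card = 3)
    (hinj : Set.InjOn oocf (oocP A : Set ((Fin m × ZMod n) × (Fin m × ZMod n)))) :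
    ((oocD A).filter (fun t => ZMod.castHom h2 (ZMod 2) t.2.2 = 1)).card = 0 ∨
    ((oocD A).filter (fun t => ZMod.castHom h2 (ZMod 2) t.2.2 = 1)).card = 4 := by
  set χ : ZMod n →+* ZMod 2 := ZMod.castHom h2 (ZMod 2) with hχ
  have key : ∀ x y : ZMod 2, (y - x = 1) ↔ ((x = 0 ∧ y = 1) ∨ (x = 1 ∧ y = 0)) := by decide
  rw [oocD, Finset.filter_image]
  rw [Finset.card_image_of_injOn (hinj.mono (by exact_mod_cast Finset.filter_subset _ _))]
  have hset : (oocP A).filter (fun pq => χ (oocf pq).2.2 = 1)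
      = ((A ×ˢ A).filter (fun pq => (χ pq.1.2 = 0) ∧ (χ pq.2.2 = 1)))
        ∪ ((A ×ˢ A).filter (fun pq => (χ pq.1.2 = 1) ∧ (χ pq.2.2 = 0))) := by
    ext pq
    have hdiff : χ (oocf pq).2.2 = χ pq.2.2 - χ pq.1.2 := by
      show χ (pq.2.2 - pq.1.2) = _
      rw [map_sub]
    simp only [Finset.mem_filter, Finset.mem_union, oocP, Finset.mem_product, hdiff,
      key (χ pq.1.2) (χ pq.2.2)]
    constructor
    · rintro ⟨⟨hmem, hne⟩, hor⟩
      rcases hor with h | h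
      · exact Or.inl ⟨hmem, h⟩
      · exact Or.inr ⟨hmem, h⟩
    · rintro (⟨hmem, h⟩ | ⟨hmem, h⟩)
      · refine ⟨⟨hmem, fun he => ?_⟩, Or.inl h⟩
        rw [he] at h; exact absurd (h.1.symm.trans h.2) (by decide)
      · refine ⟨⟨hmem, fun he => ?_⟩, Or.inr h⟩
        rw [he] at h; exact absurd (h.2.symm.trans h.1) (by decide)
  rw [hset]
  have hdisj : Disjoint ((A ×ˢ A).filter (fun pq => (χ pq.1.2 = 0) ∧ (χ pq.2.2 = 1)))
      ((A ×ˢ A).filter (fun pq => (χ pq.1.2 = 1) ∧ (χ pq.2.2 = 0))) := by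
    rw [Finset.disjoint_left]
    intro pq h1 h2
    rw [Finset.mem_filter] at h1 h2
    exact absurd (h1.2.1.symm.trans h2.2.1) (by decide)
  rw [Finset.card_union_of_disjoint hdisj]
  rw [show ((A ×ˢ A).filter (fun pq => (χ pq.1.2 = 0) ∧ (χ pq.2.2 = 1)))
      = (A.filter (fun p => χ p.2 = 0)) ×ˢ (A.filter (fun p => χ p.2 = 1)) by
      ext pq; simp only [Finset.mem_filter, Finset.mem_product]; tauto,
    show ((A ×ˢ A).filter (fun pq => (χ pq.1.2 = 1) ∧ (χ pq.2.2 = 0)))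
      = (A.filter (fun p => χ p.2 = 1)) ×ˢ (A.filter (fun p => χ p.2 = 0)) by
      ext pq; simp only [Finset.mem_filter, Finset.mem_product]; tauto,
    Finset.card_product, Finset.card_product]
  set a := (A.filter (fun p => χ p.2 = 0)).card with ha
  set b := (A.filter (fun p => χ p.2 = 1)).card with hb
  have hab : a + b = 3 := by
    have h1 := Finset.card_filter_add_card_filter_not
      (s := A) (p := fun p => χ p.2 = 0)
    have h2 : A.filter (fun p => ¬ χ p.2 = 0) = A.filter (fun p => χ p.2 = 1) := by
      apply Finset.filter_congr
      intro x _
      have : ∀ y : ZMod 2, (¬ y = 0) ↔ y = 1 := by decide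
      simp [this]
    rw [h2, hA] at h1
    omega
  have ha3 : a ≤ 3 := by omega
  interval_cases a <;> omega

lemma zmod_odd_card {n : ℕ} [NeZero n] (h2 : (2:ℕ) ∣ n) :
    (Finset.univ.filter (fun z : ZMod n => ZMod.castHom h2 (ZMod 2) z = 1)).card = n / 2 := by
  set χ : ZMod n →+* ZMod 2 := ZMod.castHom h2 (ZMod 2) with hχ
  set S0 := Finset.univ.filter (fun z : ZMod n => χ z = 0) with hS0
  set S1 := Finset.univ.filter (fun z : ZMod n => χ z = 1) with hS1
  have hcards : S0.card = S1.card := by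
    apply Finset.card_nbij' (fun z => z + 1) (fun z => z - 1)
    · intro a ha
      rw [hS0, Finset.mem_coe, Finset.mem_filter] at ha
      rw [hS1, Finset.mem_coe, Finset.mem_filter]
      refine ⟨Finset.mem_univ _, ?_⟩
      rw [map_add, ha.2, map_one, zero_add]
    · intro a ha
      rw [hS1, Finset.mem_coe, Finset.mem_filter] at ha
      rw [hS0, Finset.mem_coe, Finset.mem_filter]
      refine ⟨Finset.mem_univ _, ?_⟩
      rw [map_sub, ha.2, map_one, sub_self]
    · intro a _; ring
    · intro a _; ring
  have hsum : S0.card + S1.card = n := by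
    have h1 := Finset.card_filter_add_card_filter_not
      (s := (Finset.univ : Finset (ZMod n))) (p := fun z => χ z = 0)
    have h2' : Finset.univ.filter (fun z : ZMod n => ¬ χ z = 0) = S1 := by
      apply Finset.filter_congr
      intro x _
      have : ∀ y : ZMod 2, (¬ y = 0) ↔ y = 1 := by decide
      simp [this]
    rw [h2', ← hS0] at h1
    have hcu : (Finset.univ : Finset (ZMod n)).card = n := by
      rw [Finset.card_univ, ZMod.card]
    omega
  omega

lemma ooc_arith (m n : ℕ) (hm : 0 < m) (hn : 0 < n) (hn2 : n % 2 = 0)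
    (h : (m % 3 = 0 ∧ (m * n % 24 = 6 ∨ m * n % 24 = 12)) ∨
         (m * n % 24 = 14 ∨ m * n % 24 = 20)) :
    6 ∣ m * (m * n - 2) ∧
    ((n % 4 = 2 ∧ (m * m * (n/2) - m) % 4 = 2) ∨ (n % 4 = 0 ∧ (m * m * (n/2)) % 4 = 2)) := by
  have hn' : n = 2 * (n / 2) := by omega
  constructor
  · rcases h with ⟨h3, h612⟩ | h1420
    · have h2' : 2 ∣ (m * n - 2) := by omega
      have hd2 : 2 ∣ m * (m * n - 2) := h2'.mul_left m
      have hd3 : 3 ∣ m * (m * n - 2) := (Nat.dvd_of_mod_eq_zero h3).mul_right _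
      exact (show Nat.Coprime 2 3 by decide).mul_dvd_of_dvd_of_dvd hd2 hd3
    · have h6 : 6 ∣ (m * n - 2) := by omega
      exact h6.mul_left m
  · set X := m * (n / 2) with hXdef
    set Y := m * m * (n / 2) with hYdef
    have hMX : m * n = 2 * X := by rw [hXdef]; nth_rewrite 1 [hn']; ring
    have hYX : Y = m * X := by rw [hYdef, hXdef]; ring
    have hXmod : X % 4 = (m % 4) * ((n / 2) % 4) % 4 := by rw [hXdef, Nat.mul_mod]
    have hYm : m ≤ Y := by
      rw [hYdef]
      calc m = m * 1 * 1 := by ring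
        _ ≤ m * m * (n / 2) := by
            apply Nat.mul_le_mul (Nat.mul_le_mul_left m hm) (by omega)
    have hM8 : m * n % 8 = 4 ∨ m * n % 8 = 6 := by
      rcases h with ⟨h3, h612 | h612⟩ | h1420 | h1420 <;> omega
    have hX4 : X % 4 = 2 ∨ X % 4 = 3 := by omega
    have hYmod : Y % 4 = (m % 4) * (X % 4) % 4 := by rw [hYX, Nat.mul_mod]
    rcases (by omega : m % 4 = 0 ∨ m % 4 = 1 ∨ m % 4 = 2 ∨ m % 4 = 3) with h1 | h1 | h1 | h1 <;>
      rcases (by omega : (n/2) % 4 = 0 ∨ (n/2) % 4 = 1 ∨ (n/2) % 4 = 2 ∨ (n/2) % 4 = 3)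
        with h2 | h2 | h2 | h2 <;>
      rw [h1, h2] at hXmod <;> norm_num at hXmod <;>
      rw [h1, hXmod] at hYmod <;> norm_num at hYmod <;>
      omega

lemma ooc_final (m Cc M : ℕ) (hM : 2 ≤ M) (hM2 : M % 2 = 0)
    (hdvd : 6 ∣ m * (M - 2)) (hle : 6 * Cc ≤ m * M - 2 * m - 2) :
    Cc ≤ m * ((M - 1) / 2) / 3 - 1 := by
  obtain ⟨s, rfl⟩ : ∃ s, M = 2 * s + 2 := ⟨(M - 2) / 2, by omega⟩
  have e1 : (2 * s + 2 - 1) / 2 = s := by omega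
  rw [e1]
  have e2 : m * (2 * s + 2 - 2) = 2 * (m * s) := by
    rw [show 2 * s + 2 - 2 = 2 * s from by omega]; ring
  rw [e2] at hdvd
  have e3 : m * (2 * s + 2) = 2 * (m * s) + 2 * m := by ring
  rw [e3] at hle
  obtain ⟨t, ht⟩ : ∃ t, m * s = t := ⟨_, rfl⟩
  rw [ht] at hdvd hle ⊢
  omega

theorem stmt_1 (m n : ℕ) (hm : 0 < m) (hn : 0 < n) (hn2 : n % 2 = 0)
    (h : (m % 3 = 0 ∧ (m * n % 24 = 6 ∨ m * n % 24 = 12)) ∨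
         (m * n % 24 = 14 ∨ m * n % 24 = 20)) :
    ∀ C : Finset (Finset (Fin m × ZMod n)), IsOOC m n 3 1 C → C.card ≤ J m n - 1 := by
  intro C hC
  classical
  haveI : NeZero n := ⟨hn.ne'⟩
  have h2 : (2:ℕ) ∣ n := Nat.dvd_of_mod_eq_zero hn2
  have hn2' : 2 ≤ n := by omega
  set χ : ZMod n →+* ZMod 2 := ZMod.castHom h2 (ZMod 2) with hχdef
  obtain ⟨harith1, harith2⟩ := ooc_arith m n hm hn hn2 h
  -- the union of all difference sets
  set U := C.biUnion oocD with hUdef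
  have hdisjC : ∀ A ∈ C, ∀ B ∈ C, A ≠ B → Disjoint (oocD A) (oocD B) :=
    fun A hA B hB hAB => ooc_disj hC hA hB hAB
  have hDcard : ∀ A ∈ C, (oocD A).card = 6 := by
    intro A hA
    rw [oocD, Finset.card_image_of_injOn (ooc_inj hC hA), oocP_card (hC.1 A hA)]
  have hUcard : U.card = 6 * C.card := by
    rw [hUdef, Finset.card_biUnion hdisjC, Finset.sum_congr rfl hDcard,
      Finset.sum_const, smul_eq_mul, mul_comm]
  -- the odd part of U
  set Uo := U.filter (fun t => χ t.2.2 = 1) with hUodef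
  set Ue := U.filter (fun t => ¬ χ t.2.2 = 1) with hUedef
  have hUsplit : Uo.card + Ue.card = U.card :=
    Finset.card_filter_add_card_filter_not _
  have hUo4 : 4 ∣ Uo.card := by
    rw [hUodef, hUdef, Finset.filter_biUnion]
    rw [Finset.card_biUnion (fun A hA B hB hAB =>
      Finset.disjoint_filter_filter (hdisjC A hA B hB hAB))]
    apply Finset.dvd_sum
    intro A hA
    rcases ooc_parity h2 (hC.1 A hA) (ooc_inj hC hA) with hp | hp <;> rw [hp] <;> norm_num
  -- global sets
  set Go := (Finset.univ : Finset (Fin m × Fin m × ZMod n)).filter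
    (fun t => χ t.2.2 = 1) with hGodef
  set Ge := (Finset.univ : Finset (Fin m × Fin m × ZMod n)).filter
    (fun t => ¬ χ t.2.2 = 1) with hGedef
  have hGocard : Go.card = m * m * (n / 2) := by
    rw [hGodef]
    rw [show (Finset.univ : Finset (Fin m × Fin m × ZMod n)).filter (fun t => χ t.2.2 = 1)
        = Finset.univ ×ˢ (Finset.univ ×ˢ (Finset.univ.filter (fun z : ZMod n => χ z = 1))) by
      ext t
      simp only [Finset.mem_filter, Finset.mem_product, Finset.mem_univ, true_and]]
    rw [Finset.card_product, Finset.card_product, zmod_odd_card h2, Finset.card_univ,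
      Fintype.card_fin]
    ring
  have hGsplit : Go.card + Ge.card = m * m * n := by
    rw [hGodef, hGedef]
    rw [Finset.card_filter_add_card_filter_not]
    rw [Finset.card_univ]
    simp [ZMod.card]
    ring
  -- bad diagonal elements
  set δh : ZMod n := ((n / 2 : ℕ) : ZMod n) with hδhdef
  have hδh2 : δh + δh = 0 := by
    rw [hδhdef, ← Nat.cast_add, show n / 2 + n / 2 = n from by omega, ZMod.natCast_self]
  have hδhne : δh ≠ 0 := by
    rw [hδhdef]
    intro hz
    have := (ZMod.natCast_eq_zero_iff _ _).mp hz
    have := Nat.le_of_dvd (by omega) this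
    omega
  have hχδh : χ δh = ((n / 2 : ℕ) : ZMod 2) := by
    rw [hδhdef, hχdef, map_natCast]
  set B0 := Finset.univ.image (fun i : Fin m => (i, i, (0 : ZMod n))) with hB0def
  set Bh := Finset.univ.image (fun i : Fin m => (i, i, δh)) with hBhdef
  have hB0card : B0.card = m := by
    rw [hB0def, Finset.card_image_of_injective _
      (fun a b hab => (Prod.ext_iff.mp hab).1), Finset.card_univ, Fintype.card_fin]
  have hBhcard : Bh.card = m := by
    rw [hBhdef, Finset.card_image_of_injective _
      (fun a b hab => (Prod.ext_iff.mp hab).1), Finset.card_univ, Fintype.card_fin]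
  have hB0mem : ∀ t ∈ B0, t.2.2 = 0 := by
    rintro t ht
    obtain ⟨i, -, rfl⟩ := Finset.mem_image.mp ht
    rfl
  have hBhmem : ∀ t ∈ Bh, t.2.2 = δh := by
    rintro t ht
    obtain ⟨i, -, rfl⟩ := Finset.mem_image.mp ht
    rfl
  have hUB0 : ∀ t ∈ U, t ∉ B0 := by
    intro t htU htB
    obtain ⟨i, -, rfl⟩ := Finset.mem_image.mp htB
    obtain ⟨A, hA, htA⟩ := Finset.mem_biUnion.mp htU
    exact ooc_excl hC hA i 0 (by ring) htA
  have hUBh : ∀ t ∈ U, t ∉ Bh := by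
    intro t htU htB
    obtain ⟨i, -, rfl⟩ := Finset.mem_image.mp htB
    obtain ⟨A, hA, htA⟩ := Finset.mem_biUnion.mp htU
    exact ooc_excl hC hA i δh hδh2 htA
  have hχ0 : χ (0 : ZMod n) = 0 := map_zero χ
  -- main bound
  have hmain : 6 * C.card ≤ m * m * n - 2 * m - 2 := by
    rcases harith2 with ⟨hn4, hF2⟩ | ⟨hn4, hF2⟩
    · -- n ≡ 2 (mod 4): half is odd
      have hχδh1 : χ δh = 1 := by
        rw [hχδh, show ((n / 2 : ℕ) : ZMod 2) = (((n / 2) % 2 : ℕ) : ZMod 2) from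
          (ZMod.natCast_mod _ 2).symm, show (n / 2) % 2 = 1 from by omega]
        norm_num
      have hBhGo : Bh ⊆ Go := by
        intro t ht
        rw [hGodef, Finset.mem_filter]
        exact ⟨Finset.mem_univ _, by rw [hBhmem t ht, hχδh1]⟩
      have hUoGo : Uo ⊆ Go \ Bh := by
        intro t ht
        rw [hUodef, Finset.mem_filter] at ht
        rw [Finset.mem_sdiff, hGodef, Finset.mem_filter]
        exact ⟨⟨Finset.mem_univ _, ht.2⟩, hUBh t ht.1⟩
      have hB0Ge : B0 ⊆ Ge := by
        intro t ht
        rw [hGedef, Finset.mem_filter]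
        refine ⟨Finset.mem_univ _, ?_⟩
        rw [hB0mem t ht, hχ0]
        decide
      have hUeGe : Ue ⊆ Ge \ B0 := by
        intro t ht
        rw [hUedef, Finset.mem_filter] at ht
        rw [Finset.mem_sdiff, hGedef, Finset.mem_filter]
        exact ⟨⟨Finset.mem_univ _, ht.2⟩, hUB0 t ht.1⟩
      have hUo_le : Uo.card ≤ Go.card - m := by
        calc Uo.card ≤ (Go \ Bh).card := Finset.card_le_card hUoGo
          _ = Go.card - m := by rw [Finset.card_sdiff_of_subset hBhGo, hBhcard]
      have hUe_le : Ue.card ≤ Ge.card - m := by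
        calc Ue.card ≤ (Ge \ B0).card := Finset.card_le_card hUeGe
          _ = Ge.card - m := by rw [Finset.card_sdiff_of_subset hB0Ge, hB0card]
      have hGom : m ≤ Go.card := by
        calc m = Bh.card := hBhcard.symm
          _ ≤ Go.card := Finset.card_le_card hBhGo
      have hGem : m ≤ Ge.card := by
        calc m = B0.card := hB0card.symm
          _ ≤ Ge.card := Finset.card_le_card hB0Ge
      rw [hGocard] at hUo_le hGom
      have hGecard : Ge.card = m * m * n - m * m * (n / 2) := by
        rw [← hGsplit, hGocard]
        omega
      rw [hGecard] at hUe_le hGem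
      have hnn : m * m * n = 2 * (m * m * (n / 2)) := by
        conv_lhs => rw [show n = 2 * (n / 2) from by omega]
        ring
      omega
    · -- n ≡ 0 (mod 4): half is even
      have hχδh1 : χ δh = 0 := by
        rw [hχδh, show ((n / 2 : ℕ) : ZMod 2) = (((n / 2) % 2 : ℕ) : ZMod 2) from
          (ZMod.natCast_mod _ 2).symm, show (n / 2) % 2 = 0 from by omega]
        norm_num
      have hUoGo : Uo ⊆ Go := by
        intro t ht
        rw [hUodef, Finset.mem_filter] at ht
        rw [hGodef, Finset.mem_filter]
        exact ⟨Finset.mem_univ _, ht.2⟩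
      have hBGe : B0 ∪ Bh ⊆ Ge := by
        intro t ht
        rw [hGedef, Finset.mem_filter]
        refine ⟨Finset.mem_univ _, ?_⟩
        rcases Finset.mem_union.mp ht with ht' | ht'
        · rw [hB0mem t ht', hχ0]; decide
        · rw [hBhmem t ht', hχδh1]; decide
      have hUeGe : Ue ⊆ Ge \ (B0 ∪ Bh) := by
        intro t ht
        rw [hUedef, Finset.mem_filter] at ht
        rw [Finset.mem_sdiff, hGedef, Finset.mem_filter]
        refine ⟨⟨Finset.mem_univ _, ht.2⟩, ?_⟩
        intro htB
        rcases Finset.mem_union.mp htB with ht' | ht'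
        · exact hUB0 t ht.1 ht'
        · exact hUBh t ht.1 ht'
      have hBB : (B0 ∪ Bh).card = 2 * m := by
        rw [Finset.card_union_of_disjoint, hB0card, hBhcard]
        · omega
        · rw [Finset.disjoint_left]
          intro t ht0 hth
          exact hδhne ((hBhmem t hth).symm.trans (hB0mem t ht0) |>.symm ▸ rfl)
      have hUo_le : Uo.card ≤ Go.card - 2 := by
        have h1 : Uo.card ≤ Go.card := Finset.card_le_card hUoGo
        rw [hGocard] at h1 ⊢
        omega
      have hUe_le : Ue.card ≤ Ge.card - 2 * m := by
        calc Ue.card ≤ (Ge \ (B0 ∪ Bh)).card := Finset.card_le_card hUeGe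
          _ = Ge.card - 2 * m := by rw [Finset.card_sdiff_of_subset hBGe, hBB]
      have hBGe' : 2 * m ≤ Ge.card := hBB ▸ Finset.card_le_card hBGe
      omega
  -- finish with arithmetic
  have hMge : 2 ≤ m * n := by
    calc 2 ≤ n := hn2'
      _ ≤ m * n := Nat.le_mul_of_pos_left n hm
  have hmmn : m * m * n = m * (m * n) := by ring
  rw [hmmn] at hmain
  have hMe : (m * n) % 2 = 0 := by rw [Nat.mul_mod, hn2, mul_zero, Nat.zero_mod]
  exact ooc_final m C.card (m * n) hMge hMe harith1 hmain
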